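/- arXiv:1202.2944 — 8 statements merged into one kernel-verified Lean document; each statement's English description precedes it below -/
import Mathlib

section
/- Let a, b be natural numbers with b ≥ 1 and let S be an a × b matrix over GF(2) of full column rank b such that every row of S has at most two nonzero entries. Then S has at least one row with exactly one nonzero entry. -/
/-- An `a × b` matrix over GF(2) (with `b ≥ 1`) of full column rank `b`
whose rows all have at most two nonzero entries must have a row with exactly one
nonzero entry. -/
theorem stmt_1 (a b : ℕ) (hb : 1 ≤ b) (S : Matrix (Fin a) (Fin b) (ZMod 2))
    (hrank : S.rank = b)
    (hrow : ∀ i : Fin a, (Finset.univ.filter fun j => S i j ≠ 0).card ≤ 2) :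
    ∃ i : Fin a, (Finset.univ.filter fun j => S i j ≠ 0).card = 1 := by
  by_contra h
  push_neg at h
  -- the all-ones vector is in the kernel
  have hker : S.mulVec (fun _ => 1) = 0 := by
    funext i
    have hsum : S.mulVec (fun _ => 1) i = ∑ j, S i j := by
      simp [Matrix.mulVec, dotProduct]
    rw [Pi.zero_apply, hsum]
    have : ∑ j, S i j = ∑ j ∈ Finset.univ.filter (fun j => S i j ≠ 0), S i j := by
      rw [Finset.sum_filter_ne_zero]
    rw [this]
    have hone : ∀ j ∈ Finset.univ.filter (fun j => S i j ≠ 0), S i j = 1 := by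
      intro j hj
      simp only [Finset.mem_filter] at hj
      have h2 : ∀ x : ZMod 2, x = 0 ∨ x = 1 := by decide
      rcases h2 (S i j) with h' | h'
      · exact absurd h' hj.2
      · exact h'
    rw [Finset.sum_congr rfl hone]
    simp only [Finset.sum_const, nsmul_eq_mul, mul_one]
    have hc := hrow i
    have hc1 := h i
    set c := (Finset.univ.filter fun j => S i j ≠ 0).card with hcdef
    interval_cases c
    · simp
    · exact absurd rfl hc1
    · decide
  -- kernel is trivial since rank = b
  have hfin : Module.finrank (ZMod 2) (LinearMap.range S.mulVecLin)
      + Module.finrank (ZMod 2) (LinearMap.ker S.mulVecLin)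
      = Module.finrank (ZMod 2) (Fin b → ZMod 2) :=
    LinearMap.finrank_range_add_finrank_ker _
  have hrank' : Module.finrank (ZMod 2) (LinearMap.range S.mulVecLin) = b := hrank
  rw [hrank', Module.finrank_fintype_fun_eq_card, Fintype.card_fin] at hfin
  have hker0 : Module.finrank (ZMod 2) (LinearMap.ker S.mulVecLin) = 0 := by omega
  have hbot : LinearMap.ker S.mulVecLin = ⊥ :=
    Submodule.finrank_eq_zero.mp hker0
  have hmem : (fun _ => 1 : Fin b → ZMod 2) ∈ LinearMap.ker S.mulVecLin := by
    simpa [Matrix.mulVecLin] using hker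
  rw [hbot, Submodule.mem_bot] at hmem
  have : (1 : ZMod 2) = 0 := by
    have := congrFun hmem ⟨0, hb⟩
    simp at this
  simp at this
end

section
/- Let a, b be natural numbers and let S be an a × b matrix over GF(2) of full column rank b such that every row of S has at most two nonzero entries. Then for every nonempty subset T of the column indices there exists a row of S whose set of nonzero positions intersects T in exactly one element. (Otherwise the indicator vector of T would lie in the kernel of S, contradicting full column rank; this is the step that allows backward substitution to continue.) -/
/-- If an `a × b` matrix over GF(2) has full column rank `b` and each
row has at most two nonzero entries, then for every nonempty set `T` of column
indices there is a row whose support intersects `T` in exactly one element. -/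
theorem stmt_2 (a b : ℕ) (S : Matrix (Fin a) (Fin b) (ZMod 2))
    (hrank : S.rank = b)
    (hrow : ∀ i : Fin a, (Finset.univ.filter fun j => S i j ≠ 0).card ≤ 2) :
    ∀ T : Finset (Fin b), T.Nonempty →
      ∃ i : Fin a, ((Finset.univ.filter fun j => S i j ≠ 0) ∩ T).card = 1 := by
  intro T hT
  by_contra hcon
  push_neg at hcon
  -- indicator vector of T
  set x : Fin b → ZMod 2 := fun j => if j ∈ T then 1 else 0 with hx
  have hx0 : S.mulVec x = 0 := by
    funext i
    have hsupp := hrow i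
    have h1 := hcon i
    set c := ((Finset.univ.filter fun j => S i j ≠ 0) ∩ T).card with hc
    have hc2 : c ≤ 2 := le_trans (Finset.card_le_card (Finset.inter_subset_left)) hsupp
    have hsum : S.mulVec x i = (c : ZMod 2) := by
      simp only [Matrix.mulVec, dotProduct, hx, mul_ite, mul_one, mul_zero]
      rw [Finset.sum_ite_mem, Finset.univ_inter]
      classical
      have hmul : ∀ j ∈ T, S i j = S i j * 1 := by intro j _; rw [mul_one]
      rw [Finset.sum_congr rfl hmul]
      rw [← Finset.sum_filter_add_sum_filter_not T (fun j => S i j ≠ 0)]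
      have h2 : ∑ j ∈ T.filter (fun j => ¬ S i j ≠ 0), S i j * 1 = 0 := by
        apply Finset.sum_eq_zero
        intro j hj
        simp at hj
        simp [hj.2]
      rw [h2, add_zero]
      have h3 : ∑ j ∈ T.filter (fun j => S i j ≠ 0), S i j * 1 =
          ∑ j ∈ T.filter (fun j => S i j ≠ 0), 1 := by
        apply Finset.sum_congr rfl
        intro j hj
        simp at hj
        have h4 : ∀ y : ZMod 2, y ≠ 0 → y = 1 := by decide
        simp [h4 _ hj.2]
      rw [h3, Finset.sum_const, nsmul_eq_mul, mul_one, hc]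
      congr 1
      rw [Finset.inter_comm]
      congr 1
      ext j; simp [Finset.mem_filter, and_comm]
    rw [hsum]
    have : c = 0 ∨ c = 2 := by omega
    rcases this with h | h <;> (simp [h]; try decide)
  -- kernel trivial
  have hker : LinearMap.ker S.mulVecLin = ⊥ := by
    have hrk : S.rank = Module.finrank (ZMod 2) (Fin b → ZMod 2) := by
      simp [hrank]
    have := LinearMap.finrank_range_add_finrank_ker S.mulVecLin
    rw [Matrix.rank] at hrk
    have hkz : Module.finrank (ZMod 2) (LinearMap.ker S.mulVecLin) = 0 := by omega
    exact Submodule.finrank_eq_zero.mp hkz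
  have hxmem : x ∈ LinearMap.ker S.mulVecLin := by
    simpa [Matrix.mulVecLin_apply] using hx0
  rw [hker, Submodule.mem_bot] at hxmem
  obtain ⟨t, ht⟩ := hT
  have : x t = 1 := by simp [hx, ht]
  rw [hxmem] at this
  simp at this
end

section
/- Let a, b be natural numbers with a ≥ b and let S be an a × b matrix over GF(2) of full column rank b such that every row of S has at most two nonzero entries. Then the linear system S z = c can be solved by backward substitution; formally, there exist an injective map r : Fin b → Fin a (a selection of rows) and a bijection c : Fin b → Fin b (an ordering of columns) such that for every j, the entry S (r j) (c j) equals 1 and S (r j) (c k) = 0 for every k > j. -/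
private theorem zmod2_eq_one {x : ZMod 2} (h : x ≠ 0) : x = 1 := by
  revert h; revert x; decide

/-- Auxiliary induction: rows indexed by an arbitrary fintype. -/
theorem aux_stmt : ∀ (b : ℕ) {ι : Type} [Fintype ι] [DecidableEq ι]
    (S : Matrix ι (Fin b) (ZMod 2))
    (_ : ∀ g : Fin b → ZMod 2, (∀ i, ∑ j, S i j * g j = 0) → g = 0)
    (_ : ∀ i, (Finset.univ.filter fun j => S i j ≠ 0).card ≤ 2),
    ∃ (r : Fin b → ι) (c : Fin b ≃ Fin b), Function.Injective r ∧
      ∀ j : Fin b, S (r j) (c j) = 1 ∧ ∀ k : Fin b, j < k → S (r j) (c k) = 0 := by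
  intro b
  induction b with
  | zero =>
    intro ι _ _ S hinj hrow
    exact ⟨Fin.elim0, Equiv.refl _, fun x => x.elim0, fun j => j.elim0⟩
  | succ b IH =>
    intro ι _ _ S hinj hrow
    -- find a row of weight exactly 1
    have hex : ∃ i0 : ι, (Finset.univ.filter fun j => S i0 j ≠ 0).card = 1 := by
      by_contra h
      push_neg at h
      have hsum : ∀ i, ∑ j, S i j = 0 := by
        intro i
        have h1 : ∑ j ∈ (Finset.univ.filter fun j => S i j ≠ 0), S i j = ∑ j, S i j :=
          Finset.sum_filter_of_ne (fun x _ hx => hx)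
        have h2 : ∑ j ∈ (Finset.univ.filter fun j => S i j ≠ 0), S i j
            = ((Finset.univ.filter fun j => S i j ≠ 0).card : ZMod 2) := by
          rw [Finset.sum_congr rfl (fun x hx => zmod2_eq_one (Finset.mem_filter.mp hx).2)]
          simp
        have h4 : (((Finset.univ.filter fun j => S i j ≠ 0).card : ℕ) : ZMod 2) = 0 := by
          have hc := hrow i
          have hc1 := h i
          have h5 : (Finset.univ.filter fun j => S i j ≠ 0).card = 0 ∨
              (Finset.univ.filter fun j => S i j ≠ 0).card = 2 := by omega
          rcases h5 with h5 | h5 <;> rw [h5] <;> decide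
        rw [← h1, h2]; exact h4
      have := hinj (fun _ => 1) (by intro i; simpa using hsum i)
      have := congrFun this 0
      simp at this
    obtain ⟨i0, hi0⟩ := hex
    obtain ⟨j0, hj0⟩ := Finset.card_eq_one.mp hi0
    have hSi0j0 : S i0 j0 = 1 := by
      apply zmod2_eq_one
      have : j0 ∈ (Finset.univ.filter fun j => S i0 j ≠ 0) := by rw [hj0]; simp
      exact (Finset.mem_filter.mp this).2
    have hSi0 : ∀ j, j ≠ j0 → S i0 j = 0 := by
      intro j hj
      by_contra hne
      have : j ∈ (Finset.univ.filter fun j => S i0 j ≠ 0) := by simp [hne]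
      rw [hj0, Finset.mem_singleton] at this
      exact hj this
    -- the smaller matrix
    set ι' := {i : ι // i ≠ i0} with hι'
    set S' : Matrix ι' (Fin b) (ZMod 2) := fun i j => S i.1 (j0.succAbove j) with hS'
    have hinj' : ∀ g : Fin b → ZMod 2, (∀ i, ∑ j, S' i j * g j = 0) → g = 0 := by
      intro g hg
      have hGz : j0.insertNth (α := fun _ => ZMod 2) (0 : ZMod 2) g = 0 := by
        apply hinj
        intro i
        rw [Fin.sum_univ_succAbove _ j0]
        have hGj0 : j0.insertNth (α := fun _ => ZMod 2) (0 : ZMod 2) g j0 = 0 := by simp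
        have hGs : ∀ j : Fin b, j0.insertNth (α := fun _ => ZMod 2) (0 : ZMod 2) g (j0.succAbove j) = g j := by
          intro j; simp
        rw [hGj0, mul_zero, zero_add]
        rcases eq_or_ne i i0 with rfl | hne
        · have hz : ∀ j : Fin b, S i (j0.succAbove j) = 0 :=
            fun j => hSi0 _ (Fin.succAbove_ne j0 j)
          simp [hz]
        · have := hg ⟨i, hne⟩
          simpa [hGs, hS'] using this
      funext j
      have := congrFun hGz (j0.succAbove j)
      simpa [Fin.insertNth_apply_succAbove] using this
    have hrow' : ∀ i : ι', (Finset.univ.filter fun j => S' i j ≠ 0).card ≤ 2 := by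
      intro i
      refine le_trans ?_ (hrow i.1)
      apply Finset.card_le_card_of_injOn (fun j => j0.succAbove j)
      · intro j hj
        simp only [Finset.mem_coe, Finset.mem_filter, Finset.mem_univ, true_and] at hj ⊢
        exact hj
      · exact fun x _ y _ h => (Fin.succAbove_right_injective) h
    obtain ⟨r', c', hr'inj, hprop'⟩ := IH S' hinj' hrow'
    -- assemble
    refine ⟨Fin.cases i0 (fun j => (r' j).1),
      (finSuccEquiv b).trans ((c'.optionCongr).trans (finSuccEquiv' j0).symm), ?_, ?_⟩
    · intro x y hxy
      induction x using Fin.cases with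
      | zero =>
        induction y using Fin.cases with
        | zero => rfl
        | succ y => simp at hxy; exact absurd hxy.symm (r' y).2
      | succ x =>
        induction y using Fin.cases with
        | zero => simp at hxy; exact absurd hxy (r' x).2
        | succ y =>
          simp only [Fin.cases_succ] at hxy
          exact congrArg Fin.succ (hr'inj (Subtype.ext hxy))
    · have hc0 : ((finSuccEquiv b).trans ((c'.optionCongr).trans (finSuccEquiv' j0).symm)) 0 = j0 := by
        simp [finSuccEquiv_zero, finSuccEquiv'_symm_none]
      have hcs : ∀ j : Fin b,
          ((finSuccEquiv b).trans ((c'.optionCongr).trans (finSuccEquiv' j0).symm)) j.succ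
          = j0.succAbove (c' j) := by
        intro j
        simp [finSuccEquiv_succ, finSuccEquiv'_symm_some]
      intro j
      induction j using Fin.cases with
      | zero =>
        refine ⟨by simpa [hc0] using hSi0j0, ?_⟩
        intro k hk
        induction k using Fin.cases with
        | zero => exact absurd hk (lt_irrefl _)
        | succ k =>
          rw [hcs k]
          simpa using hSi0 _ (Fin.succAbove_ne j0 (c' k))
      | succ j =>
        refine ⟨?_, ?_⟩
        · rw [hcs j]
          simpa [hS'] using (hprop' j).1
        · intro k hk
          induction k using Fin.cases with
          | zero => exact absurd hk (Fin.not_lt_zero _).elim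
          | succ k =>
            rw [hcs k]
            have hlt : j < k := by
              have := hk
              rwa [Fin.succ_lt_succ_iff] at this
            simpa [hS'] using (hprop' j).2 k hlt

/-- An `a × b` matrix over GF(2) (`a ≥ b`) of full column rank whose
rows have weight at most two can be solved by backward substitution: there is an
injective selection of rows `r` and an ordering of the columns `c` such that row
`r j` has a `1` in column `c j` and zeros in all columns `c k` with `k > j`. -/
theorem stmt_3 (a b : ℕ) (hab : b ≤ a) (S : Matrix (Fin a) (Fin b) (ZMod 2))
    (hrank : S.rank = b)
    (hrow : ∀ i : Fin a, (Finset.univ.filter fun j => S i j ≠ 0).card ≤ 2) :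
    ∃ (r : Fin b → Fin a) (c : Fin b ≃ Fin b), Function.Injective r ∧
      ∀ j : Fin b, S (r j) (c j) = 1 ∧ ∀ k : Fin b, j < k → S (r j) (c k) = 0 := by
  apply aux_stmt
  · -- injectivity of mulVecLin from rank
    intro g hg
    have hker : LinearMap.ker S.mulVecLin = ⊥ := by
      have h1 := LinearMap.finrank_range_add_finrank_ker S.mulVecLin
      rw [show Module.finrank (ZMod 2) (LinearMap.range S.mulVecLin) = b from hrank] at h1
      have h2 : Module.finrank (ZMod 2) (Fin b → ZMod 2) = b := by simp
      rw [h2] at h1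
      have h3 : Module.finrank (ZMod 2) (LinearMap.ker S.mulVecLin) = 0 := by omega
      exact Submodule.finrank_eq_zero.mp h3
    have : S.mulVecLin g = 0 := by
      funext i
      simpa [Matrix.mulVecLin_apply, Matrix.mulVec, dotProduct] using hg i
    have hinj2 : Function.Injective S.mulVecLin := LinearMap.ker_eq_bot.mp hker
    have h0 : S.mulVecLin g = S.mulVecLin 0 := by rw [map_zero]; exact this
    exact hinj2 h0
  · exact hrow
end

section
/- Let m_s, m_r be natural numbers with 1 ≤ m_s ≤ m_r. Consider the set E of all natural numbers e with e ≤ m_r such that every decomposition e = e1 + e2 with e1 ≤ m_s and e2 ≤ m_r − m_s satisfies 2·e1 + e2 ≤ m_r. Then the maximum element of E equals ⌊m_r/2⌋ if m_r ≤ 2·m_s, and equals m_r − m_s if m_r > 2·m_s. -/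
/-- For `1 ≤ m_s ≤ m_r`, the greatest `e ≤ m_r` such that every
decomposition `e = e1 + e2` with `e1 ≤ m_s`, `e2 ≤ m_r - m_s` satisfies
`2 e1 + e2 ≤ m_r` equals `⌊m_r/2⌋` if `m_r ≤ 2 m_s` and `m_r - m_s` otherwise. -/
theorem stmt_4 (m_s m_r : ℕ) (h1 : 1 ≤ m_s) (h2 : m_s ≤ m_r) :
    IsGreatest
      {e : ℕ | e ≤ m_r ∧ ∀ e1 e2 : ℕ, e = e1 + e2 → e1 ≤ m_s → e2 ≤ m_r - m_s →
        2 * e1 + e2 ≤ m_r}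
      (if m_r ≤ 2 * m_s then m_r / 2 else m_r - m_s) := by
  split_ifs with h
  · constructor
    · refine ⟨Nat.div_le_self _ _, ?_⟩
      intro e1 e2 he he1 he2
      omega
    · rintro e ⟨hle, hdec⟩
      by_cases he : e ≤ m_s
      · have := hdec e 0 (by omega) he (by omega)
        omega
      · have := hdec m_s (e - m_s) (by omega) le_rfl (by omega)
        omega
  · constructor
    · refine ⟨by omega, ?_⟩
      intro e1 e2 he he1 he2
      omega
    · rintro e ⟨hle, hdec⟩
      by_cases he : e ≤ m_s
      · have := hdec e 0 (by omega) he (by omega)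
        omega
      · have := hdec m_s (e - m_s) (by omega) le_rfl (by omega)
        omega
end

section
/- Let m ≥ 1 and let M be a (2m) × m matrix over GF(2) whose top m × m block is the identity matrix and each of whose bottom m rows has exactly two nonzero entries. Then there exists a subset E of {0, …, m−1} with |E| ≤ 3 such that the submatrix of M obtained by deleting, for every i ∈ E, both row i and row m + i, has rank strictly less than m (indeed it has an all-zero column). -/
/-- A matrix with a zero column (finite index types, field) has rank less than the
number of columns. -/
lemma rank_lt_of_zero_col {K : Type*} [Field K] {ι κ : Type*} [Fintype ι] [Fintype κ]
    [DecidableEq κ] (A : Matrix ι κ K) (j : κ) (hj : ∀ r, A r j = 0) :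
    A.rank < Fintype.card κ := by
  classical
  have hker : A.mulVecLin (Pi.single j 1) = 0 := by
    ext r
    simp [Matrix.mulVecLin, Matrix.mulVec, dotProduct, Pi.single_apply, hj r]
  have hne : (Pi.single j (1:K) : κ → K) ≠ 0 := by
    intro h
    have := congrFun h j
    simp at this
  have hkpos : 0 < Module.finrank K (LinearMap.ker A.mulVecLin) := by
    rw [Module.finrank_pos_iff]
    exact ⟨⟨⟨Pi.single j 1, by simpa [LinearMap.mem_ker] using hker⟩, 0, by
      simpa using hne⟩⟩
  have hrn := LinearMap.finrank_range_add_finrank_ker A.mulVecLin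
  have hdim : Module.finrank K (κ → K) = Fintype.card κ := Module.finrank_pi K
  rw [hdim] at hrn
  have : A.rank + Module.finrank K (LinearMap.ker A.mulVecLin) = Fintype.card κ := hrn
  omega

/-- Lemma 2: Let `M` be a `2m × m` matrix over GF(2) whose top
`m × m` block is the identity and each of whose bottom `m` rows has exactly two
nonzero entries. Then there is a set `E` of at most `3` channel indices such that
deleting, for every `i ∈ E`, both row `i` and row `m + i` leaves a matrix with an
all-zero column, hence of rank strictly less than `m`. -/
theorem stmt_5 (m : ℕ) (hm : 1 ≤ m)
    (M : Matrix (Fin m ⊕ Fin m) (Fin m) (ZMod 2))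
    (htop : ∀ i j : Fin m, M (Sum.inl i) j = if i = j then 1 else 0)
    (hbot : ∀ u : Fin m, (Finset.univ.filter fun j => M (Sum.inr u) j ≠ 0).card = 2) :
    ∃ E : Finset (Fin m), E.card ≤ 3 ∧
      ∃ j : Fin m,
        (∀ i : Fin m, i ∉ E → M (Sum.inl i) j = 0 ∧ M (Sum.inr i) j = 0) ∧
        (M.submatrix
          (Sum.map (Subtype.val : {i : Fin m // i ∉ E} → Fin m)
            (Subtype.val : {i : Fin m // i ∉ E} → Fin m)) id).rank < m := by
  classical
  -- column counts
  set c : Fin m → ℕ := fun j => (Finset.univ.filter fun u => M (Sum.inr u) j ≠ 0).card with hc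
  have hsum : ∑ j, c j = 2 * m := by
    have : ∑ j : Fin m, c j =
        ∑ u : Fin m, (Finset.univ.filter fun j => M (Sum.inr u) j ≠ 0).card := by
      simp only [hc, Finset.card_filter]
      rw [Finset.sum_comm]
    rw [this]
    simp [hbot, Finset.sum_const, mul_comm]
  -- pigeonhole: some column has c j ≤ 2
  have hexists : ∃ j : Fin m, c j ≤ 2 := by
    by_contra h
    push_neg at h
    have : ∑ j : Fin m, 3 ≤ ∑ j, c j := Finset.sum_le_sum fun j _ => h j
    simp [Finset.sum_const, Finset.card_univ] at this
    omega
  obtain ⟨j, hj⟩ := hexists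
  set S : Finset (Fin m) := Finset.univ.filter fun u => M (Sum.inr u) j ≠ 0 with hS
  refine ⟨insert j S, ?_, j, ?_, ?_⟩
  · have : (insert j S).card ≤ S.card + 1 := Finset.card_insert_le _ _
    have hj' : S.card ≤ 2 := hj
    omega
  · intro i hi
    have hij : i ≠ j := fun h => hi (by simp [h])
    have hiS : i ∉ S := fun h => hi (Finset.mem_insert_of_mem h)
    constructor
    · rw [htop]; simp [hij]
    · by_contra h
      exact hiS (by simp [hS, h])
  · have hcard : Fintype.card (Fin m) = m := Fintype.card_fin m
    have := rank_lt_of_zero_col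
      (M.submatrix
        (Sum.map (Subtype.val : {i : Fin m // i ∉ insert j S} → Fin m)
          (Subtype.val : {i : Fin m // i ∉ insert j S} → Fin m)) id) j ?_
    · simpa [hcard] using this
    · rintro (⟨i, hi⟩ | ⟨i, hi⟩)
      · have hij : i ≠ j := fun h => hi (by simp [h])
        simp [Matrix.submatrix, htop, hij]
      · have hiS : i ∉ S := fun h => hi (Finset.mem_insert_of_mem h)
        simp only [hS, Finset.mem_filter, Finset.mem_univ, true_and, not_not] at hiS
        simpa [Matrix.submatrix] using hiS
end

section
/- Let m ≥ 4 and let M be the (2m) × m matrix over GF(2), with rows indexed by Fin m ⊕ Z/m and columns by Z/m, defined by: the top block is the identity (M(i, j) = 1 iff i = j), and the bottom block satisfies M(m + u, v) = 1 if and only if v = u + 1 or v = u + 2 in Z/m. Then: (i) for every subset E of Z/m with |E| = 2, the submatrix of M obtained by deleting, for every i ∈ E, both row i and row m + i, has full column rank m; and (ii) there exists a subset E of Z/m with |E| = 3 such that the corresponding submatrix has rank strictly less than m. (Hence the metric d_M of this coding matrix equals 3.) -/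
open Matrix

lemma rank_eq_card_of_ker {K R C : Type*} [Field K] [Fintype R] [Fintype C] [DecidableEq C]
    (A : Matrix R C K) (h : ∀ x, A.mulVec x = 0 → x = 0) :
    A.rank = Fintype.card C := by
  have hker : LinearMap.ker A.mulVecLin = ⊥ := by
    rw [LinearMap.ker_eq_bot']
    intro x hx
    exact h x hx
  have := LinearMap.finrank_range_add_finrank_ker A.mulVecLin
  rw [hker, finrank_bot] at this
  simpa [Matrix.rank, Module.finrank_fintype_fun_eq_card] using this

lemma rank_lt_card_of_ker {K R C : Type*} [Field K] [Fintype R] [Fintype C] [DecidableEq C]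
    (A : Matrix R C K) (x : C → K) (hx : x ≠ 0) (h : A.mulVec x = 0) :
    A.rank < Fintype.card C := by
  have hker : 0 < Module.finrank K (LinearMap.ker A.mulVecLin) := by
    rw [Module.finrank_pos_iff_exists_ne_zero]
    refine ⟨⟨x, h⟩, fun hc => hx ?_⟩
    exact congrArg Subtype.val hc
  have := LinearMap.finrank_range_add_finrank_ker A.mulVecLin
  rw [Module.finrank_fintype_fun_eq_card] at this
  have hr : A.rank = Module.finrank K (LinearMap.range A.mulVecLin) := rfl
  omega


/-- For `m ≥ 4`, the coding matrix of Algorithm 1 (top block the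
identity, bottom block `M (m+u) v = 1` iff `v = u+1` or `v = u+2` in `ZMod m`)
has `d_M = 3`: every submatrix obtained by erasing two channels (deleting rows
`i` and `m+i` for `i ∈ E`, `|E| = 2`) has full column rank `m`, while some
erasure of three channels yields rank strictly less than `m`. -/
theorem stmt_6 (m : ℕ) [NeZero m] (hm : 4 ≤ m)
    (M : Matrix (ZMod m ⊕ ZMod m) (ZMod m) (ZMod 2))
    (htop : ∀ i j : ZMod m, M (Sum.inl i) j = if i = j then 1 else 0)
    (hbot : ∀ u v : ZMod m, M (Sum.inr u) v = if v = u + 1 ∨ v = u + 2 then 1 else 0) :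
    (∀ E : Finset (ZMod m), E.card = 2 →
      (M.submatrix
        (Sum.map (Subtype.val : {i : ZMod m // i ∉ E} → ZMod m)
          (Subtype.val : {i : ZMod m // i ∉ E} → ZMod m)) id).rank = m) ∧
    ∃ E : Finset (ZMod m), E.card = 3 ∧
      (M.submatrix
        (Sum.map (Subtype.val : {i : ZMod m // i ∉ E} → ZMod m)
          (Subtype.val : {i : ZMod m // i ∉ E} → ZMod m)) id).rank < m := by
  -- basic numeric facts
  have hk : ∀ k : ℕ, 0 < k → k < m → ((k : ℕ) : ZMod m) ≠ 0 := by
    intro k hk0 hkm h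
    rw [ZMod.natCast_eq_zero_iff] at h
    exact absurd (Nat.le_of_dvd hk0 h) (not_le.mpr hkm)
  have h1 : (1 : ZMod m) ≠ 0 := by simpa using hk 1 one_pos (by omega)
  have h2 : (2 : ZMod m) ≠ 0 := by simpa using hk 2 (by omega) (by omega)
  have h3 : (3 : ZMod m) ≠ 0 := by simpa using hk 3 (by omega) (by omega)
  -- mulVec computations
  have htopeq : ∀ (E : Finset (ZMod m)) (x : ZMod m → ZMod 2) (i : ZMod m) (hi : i ∉ E),
      (M.submatrix
        (Sum.map (Subtype.val : {i : ZMod m // i ∉ E} → ZMod m)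
          (Subtype.val : {i : ZMod m // i ∉ E} → ZMod m)) id).mulVec x (Sum.inl ⟨i, hi⟩)
        = x i := by
    intro E x i hi
    simp only [Matrix.mulVec, dotProduct, Matrix.submatrix_apply, Sum.map_inl,
      id_eq, htop, Function.comp_apply]
    simp [ite_mul, Finset.sum_ite_eq]
  have hboteq : ∀ (E : Finset (ZMod m)) (x : ZMod m → ZMod 2) (u : ZMod m) (hu : u ∉ E),
      (M.submatrix
        (Sum.map (Subtype.val : {i : ZMod m // i ∉ E} → ZMod m)
          (Subtype.val : {i : ZMod m // i ∉ E} → ZMod m)) id).mulVec x (Sum.inr ⟨u, hu⟩)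
        = x (u + 1) + x (u + 2) := by
    intro E x u hu
    have h12 : u + 1 ≠ u + 2 := by
      intro h; exact h1 (by linear_combination -h)
    simp only [Matrix.mulVec, dotProduct, Matrix.submatrix_apply, Sum.map_inr,
      id_eq, hbot, Function.comp_apply]
    have hsplit : ∀ j : ZMod m, (if j = u + 1 ∨ j = u + 2 then (1 : ZMod 2) else 0) * x j
        = (if j = u + 1 then x j else 0) + (if j = u + 2 then x j else 0) := by
      intro j
      have h12' : (1 : ZMod m) ≠ 2 := fun h => h1 (by linear_combination -h)
      by_cases hj1 : j = u + 1 <;> by_cases hj2 : j = u + 2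
      · exact absurd (hj1 ▸ hj2) h12
      all_goals simp [hj1, hj2, h12', h12'.symm]
    rw [Finset.sum_congr rfl fun j _ => hsplit j, Finset.sum_add_distrib]
    simp [Finset.sum_ite_eq']
  constructor
  · intro E hE
    refine Eq.trans (rank_eq_card_of_ker _ ?_) (ZMod.card m)
    intro x hx
    -- extract equations
    have hzero : ∀ i, i ∉ E → x i = 0 := by
      intro i hi
      have := congrFun hx (Sum.inl ⟨i, hi⟩)
      rwa [htopeq E x i hi] at this
    have hsum : ∀ u, u ∉ E → x (u + 1) + x (u + 2) = 0 := by
      intro u hu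
      have := congrFun hx (Sum.inr ⟨u, hu⟩)
      rwa [hboteq E x u hu] at this
    have heq : ∀ u, u ∉ E → x (u + 1) = x (u + 2) := by
      intro u hu
      have := hsum u hu
      rw [← CharTwo.sub_eq_add] at this
      exact sub_eq_zero.mp this
    funext v
    by_contra hv
    have hvE : v ∈ E := by
      by_contra h; exact hv (hzero v h)
    obtain ⟨a, b, hab, hEab⟩ := Finset.card_eq_two.mp hE
    -- let w be the other element
    obtain ⟨w, hvw, hEvw⟩ : ∃ w, v ≠ w ∧ E = {v, w} := by
      rcases (by simpa [hEab] using hvE : v = a ∨ v = b) with h | h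
      · exact ⟨b, h ▸ hab, by rw [hEab, h]⟩
      · exact ⟨a, fun hc => hab (h ▸ hc.symm ▸ rfl), by rw [hEab, h, Finset.pair_comm]⟩
    have hmem : ∀ i : ZMod m, i ∈ E ↔ i = v ∨ i = w := by
      intro i; simp [hEvw]
    -- rewrite sums as v - k
    have key1 : v - 2 + 1 = v - 1 := by ring
    have key2 : v - 2 + 2 = v := by ring
    have key3 : v - 3 + 1 = v - 2 := by ring
    have key4 : v - 3 + 2 = v - 1 := by ring
    have key5 : v - 1 + 1 = v := by ring
    have key6 : v - 1 + 2 = v + 1 := by ring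
    by_cases hc : v - 2 ∈ E
    · -- then w = v - 2
      have hw : w = v - 2 := by
        rcases (hmem _).mp hc with h | h
        · exact absurd (by linear_combination -h) h2
        · exact h.symm
      have hv1 : v - 1 ∉ E := by
        rw [hmem]; push_neg
        constructor
        · intro h; exact h1 (by linear_combination -h)
        · rw [hw]; intro h; exact h1 (by linear_combination h)
      have := heq (v - 1) hv1
      rw [key5, key6] at this
      have hxv1 : x (v + 1) ≠ 0 := this ▸ hv
      have : v + 1 ∈ E := by
        by_contra h; exact hxv1 (hzero _ h)
      rcases (hmem _).mp this with h | h
      · exact h1 (by linear_combination h)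
      · rw [hw] at h; exact h3 (by linear_combination h)
    · -- v - 2 ∉ E
      have := heq (v - 2) hc
      rw [key1, key2] at this
      have hxv1 : x (v - 1) ≠ 0 := by rw [this]; exact hv
      have hv1E : v - 1 ∈ E := by
        by_contra h; exact hxv1 (hzero _ h)
      have hw : w = v - 1 := by
        rcases (hmem _).mp hv1E with h | h
        · exact absurd (by linear_combination -h) h1
        · exact h.symm
      have hv3 : v - 3 ∉ E := by
        rw [hmem]; push_neg
        constructor
        · intro h; exact h3 (by linear_combination -h)
        · rw [hw]; intro h; exact h2 (by linear_combination -h)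
      have h' := heq (v - 3) hv3
      rw [key3, key4] at h'
      rw [← h', hzero _ hc] at hxv1
      exact hxv1 rfl
  · -- part (ii)
    refine ⟨{0, 1, 2}, ?_, ?_⟩
    · rw [Finset.card_insert_of_notMem, Finset.card_insert_of_notMem,
        Finset.card_singleton]
      · simp only [Finset.mem_singleton]
        intro h; exact h1 (by linear_combination -h)
      · simp only [Finset.mem_insert, Finset.mem_singleton]
        push_neg
        exact ⟨fun h => h1 (by linear_combination -h), fun h => h2 (by linear_combination -h)⟩
    · refine lt_of_lt_of_eq
        (rank_lt_card_of_ker _ (fun v => if v = 2 then 1 else 0) ?_ ?_) (ZMod.card m)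
      · intro h
        have := congrFun h 2
        simp at this
      · funext r
        rcases r with ⟨i, hi⟩ | ⟨u, hu⟩
        · rw [htopeq _ _ i hi]
          simp only [Finset.mem_insert, Finset.mem_singleton] at hi
          push_neg at hi
          simp [hi.2.2]
        · rw [hboteq _ _ u hu]
          simp only [Finset.mem_insert, Finset.mem_singleton] at hu
          push_neg at hu
          have e1 : u + 1 ≠ 2 := by
            intro h; exact hu.2.1 (by linear_combination h)
          have e2 : u + 2 ≠ 2 := by
            intro h; exact hu.1 (by linear_combination h)
          simp [e1, e2]
end

section
/- Let m_s, m_r be natural numbers with m_s < m_r ≤ 2·m_s. Then ⌈(m_s · ⌊m_r/2⌋) / m_r⌉ = ⌈m_s/2⌉, where ⌈·⌉ denotes the ceiling of the rational quotient. -/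
/-- second case of Corollary 3: for `m_s < m_r ≤ 2 m_s`,
`⌈(m_s ⌊m_r/2⌋) / m_r⌉ = ⌈m_s / 2⌉` (ceilings of rational quotients,
`⌊m_r/2⌋` natural-number floor division). -/
theorem stmt_11 (m_s m_r : ℕ) (h1 : m_s < m_r) (h2 : m_r ≤ 2 * m_s) :
    ⌈((m_s : ℚ) * ((m_r / 2 : ℕ) : ℚ)) / (m_r : ℚ)⌉ = ⌈(m_s : ℚ) / 2⌉ := by
  obtain ⟨q, hq | hq⟩ := Nat.even_or_odd' m_r
  · subst hq
    have hq0 : 0 < q := by omega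
    have hQ : (q : ℚ) ≠ 0 := by positivity
    have : ((m_s : ℚ) * ((2 * q / 2 : ℕ) : ℚ)) / ((2 * q : ℕ) : ℚ) = (m_s : ℚ) / 2 := by
      rw [Nat.mul_div_cancel_left _ (by norm_num)]
      push_cast
      field_simp
    rw [this]
  · subst hq
    have hqm1 : q < m_s := by omega
    have hqm2 : m_s ≤ 2 * q := by omega
    have hdiv : (2 * q + 1) / 2 = q := by omega
    rw [hdiv]
    have hr0 : (0:ℚ) < ((2 * q + 1 : ℕ) : ℚ) := by positivity
    obtain ⟨k, hk | hk⟩ := Nat.even_or_odd' m_s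
    all_goals subst hk
    · have hkq : k ≤ q := by omega
      have hk1 : q < 2 * k := by omega
      have hR : ⌈((2 * k : ℕ) : ℚ) / 2⌉ = (k : ℤ) := by
        rw [Int.ceil_eq_iff]
        push_cast
        constructor <;> nlinarith
      rw [hR, Int.ceil_eq_iff]
      have hA : (k:ℚ) ≤ q := by exact_mod_cast hkq
      have hB : (0:ℚ) ≤ q := by positivity
      constructor
      · rw [lt_div_iff₀ hr0]; push_cast; nlinarith
      · rw [div_le_iff₀ hr0]; push_cast; nlinarith
    · have hkq : k + 1 ≤ q := by omega
      have hA : (k:ℚ) + 1 ≤ q := by exact_mod_cast hkq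
      have hB : (0:ℚ) ≤ k := by positivity
      have hR : ⌈((2 * k + 1 : ℕ) : ℚ) / 2⌉ = (k : ℤ) + 1 := by
        rw [Int.ceil_eq_iff]
        push_cast
        constructor <;> nlinarith
      rw [hR, Int.ceil_eq_iff]
      constructor
      · rw [lt_div_iff₀ hr0]; push_cast; nlinarith
      · rw [div_le_iff₀ hr0]; push_cast; nlinarith
end

section
/- Let m_s ≤ m_r be natural numbers with m_s ≥ 1, let T : Fin m_r → Finset (Fin m_s) be a family of transmission sets, and let M be the (m_s + m_r) × m_s matrix over GF(2) whose top m_s × m_s block is the identity and whose bottom block satisfies M(m_s + r, s) = 1 if and only if s ∈ T(r). Fix a source s and let t_s = |{r : s ∈ T(r)}|. Then there exists a set E of channel indices in Fin m_r with |E| ≤ 1 + t_s such that the submatrix of M obtained by deleting, for every i ∈ E, row i (when i < m_s) and row m_s + i, has an all-zero column, and hence has rank strictly less than m_s. -/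
lemma zero_col_rank_lt {m : Type*} [Fintype m] {n : ℕ} (hn : 1 ≤ n)
    (A : Matrix m (Fin n) (ZMod 2)) (j : Fin n) (hj : ∀ i, A i j = 0) :
    A.rank < n := by
  have hker : (Pi.single j 1 : Fin n → ZMod 2) ∈ LinearMap.ker A.mulVecLin := by
    rw [LinearMap.mem_ker]
    funext i
    simp [Matrix.mulVecLin_apply, Matrix.mulVec_single, hj i]
  have hne : (Pi.single j 1 : Fin n → ZMod 2) ≠ 0 := by
    intro hcontra
    have := congrFun hcontra j
    simp at this
  have h1 : 0 < Module.finrank (ZMod 2) (LinearMap.ker A.mulVecLin) := by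
    rw [Module.finrank_pos_iff_exists_ne_zero]
    exact ⟨⟨_, hker⟩, by simpa [Submodule.mk_eq_zero] using hne⟩
  have hrn := LinearMap.finrank_range_add_finrank_ker A.mulVecLin
  rw [Module.finrank_fintype_fun_eq_card, Fintype.card_fin] at hrn
  have : A.rank = Module.finrank (ZMod 2) (LinearMap.range A.mulVecLin) := rfl
  omega

/-- core of Proposition 2: erase the channel of source `s`
together with the channels of all `t_s` relays helping `s`; the remaining rows
of the coding matrix `M` have an all-zero column, hence rank `< m_s`. -/
theorem stmt_13 (m_s m_r : ℕ) (hms : 1 ≤ m_s) (h : m_s ≤ m_r)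
    (T : Fin m_r → Finset (Fin m_s))
    (M : Matrix (Fin m_s ⊕ Fin m_r) (Fin m_s) (ZMod 2))
    (htop : ∀ i j : Fin m_s, M (Sum.inl i) j = if i = j then 1 else 0)
    (hbot : ∀ (r : Fin m_r) (t : Fin m_s), M (Sum.inr r) t = if t ∈ T r then 1 else 0)
    (s : Fin m_s) :
    ∃ E : Finset (Fin m_r),
      E.card ≤ 1 + (Finset.univ.filter fun r => s ∈ T r).card ∧
      ∃ j : Fin m_s,
        (∀ i : Fin m_s, Fin.castLE h i ∉ E → M (Sum.inl i) j = 0) ∧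
        (∀ r : Fin m_r, r ∉ E → M (Sum.inr r) j = 0) ∧
        (M.submatrix
          (Sum.map (Subtype.val : {i : Fin m_s // Fin.castLE h i ∉ E} → Fin m_s)
            (Subtype.val : {r : Fin m_r // r ∉ E} → Fin m_r)) id).rank < m_s := by
  classical
  refine ⟨insert (Fin.castLE h s) (Finset.univ.filter fun r => s ∈ T r), ?_, s, ?_, ?_, ?_⟩
  · calc _ ≤ (Finset.univ.filter fun r => s ∈ T r).card + 1 := Finset.card_insert_le _ _
      _ = _ := Nat.add_comm _ _
  · intro i hi
    rw [htop]
    have : i ≠ s := by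
      rintro rfl
      exact hi (Finset.mem_insert_self _ _)
    simp [this]
  · intro r hr
    rw [hbot]
    have : s ∉ T r := fun hs =>
      hr (Finset.mem_insert_of_mem (Finset.mem_filter.2 ⟨Finset.mem_univ _, hs⟩))
    simp [this]
  · apply zero_col_rank_lt hms
    rintro (⟨i, hi⟩ | ⟨r, hr⟩)
    · show M (Sum.inl i) s = 0
      rw [htop]
      have : i ≠ s := by
        rintro rfl
        exact hi (Finset.mem_insert_self _ _)
      simp [this]
    · show M (Sum.inr r) s = 0
      rw [hbot]
      have : s ∉ T r := fun hs =>
        hr (Finset.mem_insert_of_mem (Finset.mem_filter.2 ⟨Finset.mem_univ _, hs⟩))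
      simp [this]
end
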